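/- For every nonprincipal ultrafilter U on ℕ, the cofinality of the ultrapower U-prod ω is at least the groupwise density number 𝔤; that is, every set C of functions ℕ → ℕ that is cofinal with respect to ≤_U has cardinality at least 𝔤. -/
import Mathlib


open Cardinal Set Filter

/-- A nonprincipal ultrafilter on ℕ: one that is not of the form `pure n`. -/
def Nonprincipal (U : Ultrafilter ℕ) : Prop := ∀ n : ℕ, U ≠ pure n

/-- `C` is cofinal in the ultrapower `U-prod ω` with respect to `≤_U`. -/
def UCofinal (U : Ultrafilter ℕ) (C : Set (ℕ → ℕ)) : Prop :=
  ∀ f : ℕ → ℕ, ∃ g ∈ C, {n : ℕ | f n ≤ g n} ∈ U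

/-- The cofinality of the ultrapower `U-prod ω`: the least cardinality of a
set of functions cofinal with respect to `≤_U`. -/
noncomputable def cfUProd (U : Ultrafilter ℕ) : Cardinal :=
  sInf {c : Cardinal | ∃ C : Set (ℕ → ℕ), UCofinal U C ∧ c = #C}

/-- The bounding number 𝔟. -/
noncomputable def boundingNumber : Cardinal :=
  sInf {c : Cardinal | ∃ B : Set (ℕ → ℕ),
    (∀ f : ℕ → ℕ, ∃ g ∈ B, {n : ℕ | f n ≤ g n}.Infinite) ∧ c = #B}

/-- The dominating number 𝔡. -/
noncomputable def dominatingNumber : Cardinal :=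
  sInf {c : Cardinal | ∃ D : Set (ℕ → ℕ),
    (∀ f : ℕ → ℕ, ∃ g ∈ D, {n : ℕ | ¬ f n ≤ g n}.Finite) ∧ c = #D}

/-- The splitting number 𝔰. -/
noncomputable def splittingNumber : Cardinal :=
  sInf {c : Cardinal | ∃ S : Set (Set ℕ),
    (∀ X : Set ℕ, X.Infinite → ∃ Y ∈ S, (X ∩ Y).Infinite ∧ (X \ Y).Infinite) ∧ c = #S}

/-- A family of infinite subsets of ℕ is groupwise dense if it is closed under
infinite subsets and finite modifications and, for every partition of ℕ into
consecutive finite intervals (given by a strictly increasing sequence starting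
at 0), the union of some infinitely many of the intervals is in the family. -/
def GroupwiseDense (G : Set (Set ℕ)) : Prop :=
  (∀ X ∈ G, X.Infinite) ∧
  (∀ X ∈ G, ∀ Y : Set ℕ, Y ⊆ X → Y.Infinite → Y ∈ G) ∧
  (∀ X ∈ G, ∀ Y : Set ℕ, (symmDiff X Y).Finite → Y ∈ G) ∧
  (∀ a : ℕ → ℕ, a 0 = 0 → StrictMono a →
    ∃ K : Set ℕ, K.Infinite ∧ (⋃ k ∈ K, Set.Ico (a k) (a (k + 1))) ∈ G)

/-- The groupwise density number 𝔤. -/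
noncomputable def groupwiseDensityNumber : Cardinal :=
  sInf {c : Cardinal | ∃ 𝒢 : Set (Set (Set ℕ)),
    (∀ G ∈ 𝒢, GroupwiseDense G) ∧ ⋂₀ 𝒢 = ∅ ∧ c = #𝒢}

/-- `U` is a pseudo-P_κ point. -/
def PseudoPPoint (U : Ultrafilter ℕ) (κ : Cardinal) : Prop :=
  ∀ F : Set (Set ℕ), (∀ A ∈ F, A ∈ U) → #F < κ →
    ∃ A : Set ℕ, A.Infinite ∧ ∀ B ∈ F, (A \ B).Finite

/-- A finite-to-one function on ℕ. -/
def FinToOne (f : ℕ → ℕ) : Prop := ∀ n : ℕ, (f ⁻¹' {n}).Finite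

/-- Two ultrafilters are nearly coherent if they have a common image under
finite-to-one maps. -/
def NearlyCoherent (U U' : Ultrafilter ℕ) : Prop :=
  ∃ f f' : ℕ → ℕ, FinToOne f ∧ FinToOne f' ∧
    Ultrafilter.map f U = Ultrafilter.map f' U'

/-- `nuX X n` is the least element of `X` greater than `n`. -/
noncomputable def nuX (X : Set ℕ) (n : ℕ) : ℕ := sInf {m : ℕ | m ∈ X ∧ n < m}

namespace StmtAux

def gg (g : ℕ → ℕ) (n : ℕ) : ℕ := (Finset.range (n + 1)).sup g

lemma gg_mono (g : ℕ → ℕ) : Monotone (gg g) := fun m n h =>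
  Finset.sup_mono (Finset.range_subset_range.2 (by omega))

lemma le_gg (g : ℕ → ℕ) (n : ℕ) : g n ≤ gg g n :=
  Finset.le_sup (Finset.self_mem_range_succ n)

lemma nuX_spec {X : Set ℕ} (hX : X.Infinite) (n : ℕ) : nuX X n ∈ X ∧ n < nuX X n := by
  have h : {m : ℕ | m ∈ X ∧ n < m}.Nonempty := by
    obtain ⟨b, hb, hlt⟩ := hX.exists_gt n
    exact ⟨b, hb, hlt⟩
  exact Nat.sInf_mem h

lemma nuX_le {X : Set ℕ} {n m : ℕ} (hm : m ∈ X) (h : n < m) : nuX X n ≤ m :=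
  Nat.sInf_le ⟨hm, h⟩

lemma nuX_mono {X Y : Set ℕ} (hY : Y.Infinite) (hXY : Y ⊆ X) (n : ℕ) :
    nuX X n ≤ nuX Y n :=
  nuX_le (hXY (nuX_spec hY n).1) (nuX_spec hY n).2

lemma cofinite_mem {U : Ultrafilter ℕ} (hU : Nonprincipal U) {s : Set ℕ}
    (hs : sᶜ.Finite) : s ∈ U := by
  by_contra h
  have h2 : sᶜ ∈ U := Ultrafilter.compl_mem_iff_notMem.2 h
  obtain ⟨x, _, hx⟩ := Ultrafilter.eq_pure_of_finite_mem hs h2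
  exact hU x hx

def GG (U : Ultrafilter ℕ) (g : ℕ → ℕ) : Set (Set ℕ) :=
  {X | X.Infinite ∧ {n | gg g n < nuX X n} ∈ U}

lemma biUnion_Ico_consec (a : ℕ → ℕ) (ha : Monotone a) {j j' : ℕ} (h : j ≤ j') :
    (⋃ k ∈ Set.Ico j j', Set.Ico (a k) (a (k + 1))) = Set.Ico (a j) (a j') := by
  induction j', h using Nat.le_induction with
  | base => simp
  | succ j' hj ih =>
    have hsplit : Set.Ico j (j' + 1) = Set.Ico j j' ∪ {j'} := by
      ext x; simp only [Set.mem_Ico, Set.mem_union, Set.mem_singleton_iff]; omega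
    rw [hsplit, Set.biUnion_union, ih, Set.biUnion_singleton,
      Set.Ico_union_Ico_eq_Ico (ha hj) (ha (Nat.le_succ j'))]

def kseq (g a : ℕ → ℕ) : ℕ → ℕ
  | 0 => 0
  | i + 1 => max (kseq g a i + 1) (gg g (a (kseq g a i)) + 1)

lemma kseq_lt (g a : ℕ → ℕ) (i : ℕ) : kseq g a i < kseq g a (i + 1) :=
  lt_of_lt_of_le (Nat.lt_succ_self _) (le_max_left _ _)

lemma kseq_strictMono (g a : ℕ → ℕ) : StrictMono (kseq g a) :=
  strictMono_nat_of_lt_succ (kseq_lt g a)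

lemma GG_dense {U : Ultrafilter ℕ} (hU : Nonprincipal U) (g : ℕ → ℕ) :
    GroupwiseDense (GG U g) := by
  refine ⟨fun X hX => hX.1, ?_, ?_, ?_⟩
  · rintro X ⟨hXinf, hXU⟩ Y hYX hYinf
    refine ⟨hYinf, Filter.mem_of_superset hXU fun n hn => ?_⟩
    exact lt_of_lt_of_le hn (nuX_mono hYinf hYX n)
  · rintro X ⟨hXinf, hXU⟩ Y hfin
    have hXY : (X \ Y).Finite := hfin.subset fun x hx =>
      Set.mem_symmDiff.2 (Or.inl ⟨hx.1, hx.2⟩)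
    have hYinf : Y.Infinite := by
      have h1 : (X \ (X \ Y)).Infinite := hXinf.diff hXY
      rw [sdiff_sdiff_right_self] at h1
      exact h1.mono Set.inter_subset_right
    obtain ⟨b, hb⟩ := hfin.bddAbove
    have hcong : ∀ n, b ≤ n → nuX X n = nuX Y n := by
      intro n hn
      have : {m : ℕ | m ∈ X ∧ n < m} = {m : ℕ | m ∈ Y ∧ n < m} := by
        ext m
        simp only [Set.mem_setOf_eq, and_congr_left_iff]
        intro hnm
        have hm : m ∉ symmDiff X Y := fun hmem => by
          have := hb hmem; omega
        rw [Set.mem_symmDiff] at hm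
        tauto
      unfold nuX; rw [this]
    refine ⟨hYinf, Filter.mem_of_superset
      (Filter.inter_mem hXU (cofinite_mem hU (s := {n | b ≤ n})
        ((Set.finite_Iio b).subset fun x hx => by
          simp only [Set.mem_compl_iff, Set.mem_setOf_eq, not_le] at hx
          exact hx))) ?_⟩
    rintro n ⟨h1, h2⟩
    have := hcong n h2
    simp only [Set.mem_setOf_eq] at h1 ⊢
    omega
  · intro a ha0 hamono
    have hcm : StrictMono fun i => a (kseq g a i) := hamono.comp (kseq_strictMono g a)
    have hstar : ∀ i n, n ≤ a (kseq g a i) → gg g n < a (kseq g a (i + 1)) := by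
      intro i n hn
      have h1 : gg g n ≤ gg g (a (kseq g a i)) := gg_mono g hn
      have h2 : gg g (a (kseq g a i)) + 1 ≤ kseq g a (i + 1) := by
        simp only [kseq]; exact le_max_right _ _
      have h3 : kseq g a (i + 1) ≤ a (kseq g a (i + 1)) := hamono.le_apply
      omega
    have hk0 : a (kseq g a 0) = 0 := by simp [kseq, ha0]
    set J : ℕ → ℕ := fun n => Nat.findGreatest (fun j => a (kseq g a j) ≤ n) n with hJ
    have hJ1 : ∀ n, a (kseq g a (J n)) ≤ n := fun n =>
      Nat.findGreatest_spec (P := fun j => a (kseq g a j) ≤ n) (Nat.zero_le n)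
        (le_of_eq_of_le hk0 (Nat.zero_le n))
    have hJ2 : ∀ n, n < a (kseq g a (J n + 1)) := by
      intro n
      by_contra h
      push_neg at h
      exact Nat.findGreatest_is_greatest (Nat.lt_succ_self _)
        (le_trans hcm.le_apply h) h
    obtain ⟨r, hr4, hrpure⟩ := Ultrafilter.eq_pure_of_finite_mem (Set.finite_Iio 4)
      (show Set.Iio 4 ∈ Ultrafilter.map (fun n => J n % 4) U by
        rw [Ultrafilter.mem_map]
        have : (fun n => J n % 4) ⁻¹' Set.Iio 4 = Set.univ := by
          ext n
          simp only [Set.mem_preimage, Set.mem_Iio, Set.mem_univ, iff_true]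
          omega
        rw [this]; exact Filter.univ_mem)
    rw [Set.mem_Iio] at hr4
    have hEr : {n | J n % 4 = r} ∈ U := by
      have h1 : {r} ∈ Ultrafilter.map (fun n => J n % 4) U := by
        rw [hrpure]; exact Set.mem_singleton r
      rw [Ultrafilter.mem_map] at h1
      exact h1
    refine ⟨⋃ i, Set.Ico (kseq g a (4 * i + r + 2)) (kseq g a (4 * i + r + 3)), ?_, ?_⟩
    · apply Set.infinite_of_forall_exists_gt
      intro b
      refine ⟨kseq g a (4 * (b + 1) + r + 2), Set.mem_iUnion.2 ⟨b + 1,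
        Set.mem_Ico.2 ⟨le_refl _, kseq_strictMono g a (by omega)⟩⟩, ?_⟩
      have h := (kseq_strictMono g a).le_apply (x := 4 * (b + 1) + r + 2)
      omega
    · have hXeq : (⋃ k ∈ ⋃ i, Set.Ico (kseq g a (4 * i + r + 2)) (kseq g a (4 * i + r + 3)),
          Set.Ico (a k) (a (k + 1)))
          = ⋃ i, Set.Ico (a (kseq g a (4 * i + r + 2))) (a (kseq g a (4 * i + r + 3))) := by
        rw [Set.biUnion_iUnion]
        exact Set.iUnion_congr fun i =>
          biUnion_Ico_consec a hamono.monotone (le_of_lt (kseq_strictMono g a (by omega)))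
      rw [hXeq]
      set X := ⋃ i, Set.Ico (a (kseq g a (4 * i + r + 2))) (a (kseq g a (4 * i + r + 3)))
        with hXdef
      have hXinf : X.Infinite := by
        apply Set.infinite_of_forall_exists_gt
        intro b
        refine ⟨a (kseq g a (4 * (b + 1) + r + 2)), Set.mem_iUnion.2 ⟨b + 1,
          Set.mem_Ico.2 ⟨le_refl _, hcm (by omega)⟩⟩, ?_⟩
        have h := hcm.le_apply (x := 4 * (b + 1) + r + 2)
        omega
      refine ⟨hXinf, Filter.mem_of_superset hEr ?_⟩
      intro n hn
      simp only [Set.mem_setOf_eq] at hn ⊢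
      have h1 : gg g n < a (kseq g a (J n + 2)) :=
        hstar (J n + 1) n (le_of_lt (hJ2 n))
      have hν := nuX_spec hXinf n
      have h2 : a (kseq g a (J n + 2)) ≤ nuX X n := by
        by_contra h
        push_neg at h
        obtain ⟨i, hi⟩ := Set.mem_iUnion.1 hν.1
        rw [Set.mem_Ico] at hi
        have hlt : 4 * i + r + 2 < J n + 2 := by
          by_contra h'
          push_neg at h'
          exact absurd (le_trans (hcm.monotone h') hi.1) (not_le.2 h)
        have h4 : 4 * i + r + 4 ≤ J n := by omega
        have h5 : a (kseq g a (4 * i + r + 3)) ≤ a (kseq g a (J n)) :=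
          hcm.monotone (by omega)
        have h6 := hJ1 n
        have h7 := hν.2
        omega
      omega

lemma GG_inter_empty {U : Ultrafilter ℕ} {C : Set (ℕ → ℕ)} (hC : UCofinal U C) :
    ⋂₀ ((fun g => GG U g) '' C) = ∅ := by
  rw [Set.eq_empty_iff_forall_notMem]
  intro X hX
  rw [Set.mem_sInter] at hX
  obtain ⟨g0, hg0, -⟩ := hC 0
  have hXinf : X.Infinite := (hX _ (Set.mem_image_of_mem _ hg0)).1
  obtain ⟨g, hg, hgU⟩ := hC (fun n => nuX X n)
  have h2 := hX _ (Set.mem_image_of_mem _ hg)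
  obtain ⟨n, hn1, hn2⟩ := Filter.nonempty_of_mem (Filter.inter_mem hgU h2.2)
  simp only [Set.mem_setOf_eq] at hn1 hn2
  have := le_gg g n
  omega

end StmtAux

/-- For every nonprincipal ultrafilter U on ℕ, cf(U-prod ω) ≥ 𝔤; that is,
every set of functions cofinal with respect to ≤_U has cardinality at least 𝔤. -/
theorem stmt_0 (U : Ultrafilter ℕ) (hU : Nonprincipal U) :
    groupwiseDensityNumber ≤ cfUProd U ∧
      ∀ C : Set (ℕ → ℕ), UCofinal U C → groupwiseDensityNumber ≤ #C := by
  have main : ∀ C : Set (ℕ → ℕ), UCofinal U C → groupwiseDensityNumber ≤ #C := by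
    intro C hC
    have h1 : groupwiseDensityNumber ≤ #((fun g => StmtAux.GG U g) '' C) := by
      apply csInf_le'
      refine ⟨_, fun G hG => ?_, StmtAux.GG_inter_empty hC, rfl⟩
      obtain ⟨g, -, rfl⟩ := hG
      exact StmtAux.GG_dense hU g
    exact h1.trans Cardinal.mk_image_le
  refine ⟨?_, main⟩
  apply le_csInf
  · refine ⟨#(Set.univ : Set (ℕ → ℕ)), Set.univ, fun f => ⟨f, trivial, ?_⟩, rfl⟩
    have h : {n : ℕ | f n ≤ f n} = Set.univ := by ext n; simp
    rw [h]; exact Filter.univ_mem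
  · rintro c ⟨C, hC, rfl⟩
    exact main C hC
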